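/- (Neighboring defects lemma) If (A,u,v) ∈ ℛ and u and v are adjacent in 𝐇, then d_u(A) = d_v(A). -/
import Mathlib


attribute [local instance] Classical.propDecidable

namespace FPL

/-- Vertices of the brick-wall honeycomb lattice with periodic boundary conditions. -/
abbrev Vtx (m n : ℕ) := ZMod m × ZMod n

/-- Adjacency on the brick-wall honeycomb lattice: horizontal edges between `(i,j)` and
`(i+1,j)`, and vertical edges between `(i,j)` and `(i,j+1)` whenever `i+j` is even. -/
def HoneyAdj (m n : ℕ) (x y : Vtx m n) : Prop :=
  (x.2 = y.2 ∧ (y.1 = x.1 + 1 ∨ x.1 = y.1 + 1)) ∨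
  (x.1 = y.1 ∧ ((y.2 = x.2 + 1 ∧ Even (x.1.val + x.2.val)) ∨
                (x.2 = y.2 + 1 ∧ Even (y.1.val + y.2.val))))

variable (m n : ℕ) [NeZero m] [NeZero n]

/-- The edge set of the brick-wall honeycomb lattice. -/
noncomputable def honeyEdges : Finset (Sym2 (Vtx m n)) :=
  Finset.image (fun p : Vtx m n × Vtx m n => s(p.1, p.2))
    (Finset.univ.filter fun p => HoneyAdj m n p.1 p.2)

/-- `bdeg m n A x` is the degree of the vertex `x` in the spanning subgraph `(V, A)`. -/
noncomputable def bdeg (A : Finset (Sym2 (Vtx m n))) (x : Vtx m n) : ℕ :=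
  (A.filter fun e => x ∈ e).card

/-- `(A,u,v)` is a state of the worm chain: `A ⊆ E`, and the set of odd-degree vertices of
`(V,A)` is `{u,v}` if `u ≠ v`, and is empty if `u = v`. -/
def IsWormState (A : Finset (Sym2 (Vtx m n))) (u v : Vtx m n) : Prop :=
  A ⊆ honeyEdges m n ∧ ∀ x, (Odd (bdeg m n A x) ↔ ((x = u ∨ x = v) ∧ u ≠ v))

/-- The worm state space `𝒮`. -/
abbrev WormState := {p : Finset (Sym2 (Vtx m n)) × Vtx m n × Vtx m n //
  IsWormState m n p.1 p.2.1 p.2.2}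

/-- The set `ℛ` of states with no isolated vertices. -/
def FullSupport (st : WormState m n) : Prop := ∀ x : Vtx m n, bdeg m n st.1.1 x ≠ 0

/-- The fully-packed worm transition matrix `P'_∞`. -/
noncomputable def Pinf : Matrix (WormState m n) (WormState m n) ℝ := fun st tt =>
  if st.1.2.1 = st.1.2.2 then
    (if tt = st then (bdeg m n st.1.1 st.1.2.2 : ℝ) / 3 else 0) +
    (if ∃ v' : Vtx m n, HoneyAdj m n st.1.2.2 v' ∧ s(st.1.2.2, v') ∉ st.1.1 ∧
        tt.1.1 = insert s(st.1.2.2, v') st.1.1 ∧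
        ((tt.1.2.1 = v' ∧ tt.1.2.2 = st.1.2.2) ∨ (tt.1.2.1 = st.1.2.2 ∧ tt.1.2.2 = v'))
      then 1/6 else 0)
  else
    (if bdeg m n st.1.1 st.1.2.1 = 3 ∧ ∃ u' : Vtx m n, HoneyAdj m n st.1.2.1 u' ∧
        s(st.1.2.1, u') ∈ st.1.1 ∧ tt.1.1 = st.1.1.erase s(st.1.2.1, u') ∧
        tt.1.2.1 = u' ∧ tt.1.2.2 = st.1.2.2 then 1/6 else 0) +
    (if bdeg m n st.1.1 st.1.2.1 = 1 ∧ ∃ u' : Vtx m n, HoneyAdj m n st.1.2.1 u' ∧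
        s(st.1.2.1, u') ∉ st.1.1 ∧ tt.1.1 = insert s(st.1.2.1, u') st.1.1 ∧
        tt.1.2.1 = u' ∧ tt.1.2.2 = st.1.2.2 then 1/4 else 0) +
    (if bdeg m n st.1.1 st.1.2.2 = 3 ∧ ∃ v' : Vtx m n, HoneyAdj m n st.1.2.2 v' ∧
        s(st.1.2.2, v') ∈ st.1.1 ∧ tt.1.1 = st.1.1.erase s(st.1.2.2, v') ∧
        tt.1.2.1 = st.1.2.1 ∧ tt.1.2.2 = v' then 1/6 else 0) +
    (if bdeg m n st.1.1 st.1.2.2 = 1 ∧ ∃ v' : Vtx m n, HoneyAdj m n st.1.2.2 v' ∧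
        s(st.1.2.2, v') ∉ st.1.1 ∧ tt.1.1 = insert s(st.1.2.2, v') st.1.1 ∧
        tt.1.2.1 = st.1.2.1 ∧ tt.1.2.2 = v' then 1/4 else 0)

/-- `st → tt`: some power of `P'_∞` has positive `(st,tt)` entry. -/
def Reaches (st tt : WormState m n) : Prop := ∃ k : ℕ, 0 < (Pinf m n ^ k) st tt

/-- `st ↔ tt`: mutual reachability. -/
def Comm (st tt : WormState m n) : Prop := Reaches m n st tt ∧ Reaches m n tt st

/-- The fully-packed configuration consisting of all horizontal edges. -/
noncomputable def Hconfig : Finset (Sym2 (Vtx m n)) :=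
  Finset.image (fun p : Vtx m n => s(p, (p.1 + 1, p.2))) Finset.univ


/-- Parity of a vertex: the brick-wall lattice is bipartite with respect to this parity. -/
def par (m n : ℕ) (x : Vtx m n) : ℕ := (x.1.val + x.2.val) % 2

lemma par_lt (x : Vtx m n) : par m n x < 2 := Nat.mod_lt _ (by norm_num)

lemma val_add_one_mod2 {m : ℕ} [NeZero m] (hm : Even m) (a : ZMod m) :
    (a + 1).val % 2 = (a.val + 1) % 2 := by
  have hm2 : 2 ≤ m := by
    rcases hm with ⟨k, rfl⟩
    have := NeZero.pos (k + k); omega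
  haveI : Fact (1 < m) := ⟨hm2⟩
  rw [ZMod.val_add, ZMod.val_one, Nat.mod_mod_of_dvd _ hm.two_dvd]

lemma honeyAdj_symm {x y : Vtx m n} (h : HoneyAdj m n x y) : HoneyAdj m n y x := by
  rcases h with ⟨h1, h2⟩ | ⟨h1, h2⟩
  · exact Or.inl ⟨h1.symm, h2.symm⟩
  · exact Or.inr ⟨h1.symm, h2.symm⟩

lemma par_adj (hm : Even m) (hn : Even n) {x y : Vtx m n} (h : HoneyAdj m n x y) :
    par m n x + par m n y = 1 := by
  unfold par
  rcases h with ⟨he, hx | hx⟩ | ⟨he, ⟨hx, -⟩ | ⟨hx, -⟩⟩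
  · have h1 := val_add_one_mod2 hm x.1
    rw [← hx] at h1
    have h2 : x.2.val = y.2.val := by rw [he]
    omega
  · have h1 := val_add_one_mod2 hm y.1
    rw [← hx] at h1
    have h2 : x.2.val = y.2.val := by rw [he]
    omega
  · have h1 := val_add_one_mod2 hn x.2
    rw [← hx] at h1
    have h2 : x.1.val = y.1.val := by rw [he]
    omega
  · have h1 := val_add_one_mod2 hn y.2
    rw [← hx] at h1
    have h2 : x.1.val = y.1.val := by rw [he]
    omega

lemma adj_cases (hn : Even n) {x y : Vtx m n} (h : HoneyAdj m n x y) :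
    y = (x.1 + 1, x.2) ∨ y = (x.1 - 1, x.2) ∨
      (y = (x.1, x.2 + 1) ∧ Even (x.1.val + x.2.val)) ∨
      (y = (x.1, x.2 - 1) ∧ ¬ Even (x.1.val + x.2.val)) := by
  obtain ⟨x1, x2⟩ := x
  obtain ⟨y1, y2⟩ := y
  rcases h with ⟨he, hx | hx⟩ | ⟨he, ⟨hx, hp⟩ | ⟨hx, hp⟩⟩
  · left; simp_all
  · right; left
    simp only [Prod.mk.injEq]
    constructor
    · exact eq_sub_of_add_eq hx.symm
    · exact he.symm
  · right; right; left
    simp_all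
  · right; right; right
    simp only at he hx hp ⊢
    subst he
    constructor
    · simp only [Prod.mk.injEq, true_and]
      exact eq_sub_of_add_eq hx.symm
    · have h1 := val_add_one_mod2 hn y2
      rw [← hx] at h1
      rw [Nat.even_iff] at hp ⊢
      omega

lemma bdeg_le_three (hn : Even n) {A : Finset (Sym2 (Vtx m n))}
    (hA : A ⊆ honeyEdges m n) (x : Vtx m n) : bdeg m n A x ≤ 3 := by
  classical
  set w : Vtx m n := if Even (x.1.val + x.2.val) then (x.1, x.2 + 1) else (x.1, x.2 - 1) with hw
  have hsub : A.filter (fun e => x ∈ e) ⊆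
      {s(x, (x.1 + 1, x.2)), s(x, (x.1 - 1, x.2)), s(x, w)} := by
    intro e he
    simp only [Finset.mem_filter] at he
    obtain ⟨heA, hxe⟩ := he
    have hmem := hA heA
    simp only [honeyEdges, Finset.mem_image, Finset.mem_filter] at hmem
    obtain ⟨⟨a, b⟩, ⟨-, hab⟩, rfl⟩ := hmem
    rw [Sym2.mem_iff] at hxe
    have hex : ∃ y, HoneyAdj m n x y ∧ s(a, b) = s(x, y) := by
      rcases hxe with rfl | rfl
      · exact ⟨b, hab, rfl⟩
      · exact ⟨a, honeyAdj_symm m n hab, Sym2.eq_swap⟩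
    obtain ⟨y, hxy, heq⟩ := hex
    rw [heq]
    rcases adj_cases m n hn hxy with h | h | ⟨h, hp⟩ | ⟨h, hp⟩
    · simp [Finset.mem_insert, h]
    · simp [Finset.mem_insert, h]
    · simp [Finset.mem_insert, h, hw, hp]
    · simp [Finset.mem_insert, h, hw, hp]
  calc bdeg m n A x ≤ ({s(x, (x.1 + 1, x.2)), s(x, (x.1 - 1, x.2)), s(x, w)} :
        Finset (Sym2 (Vtx m n))).card := Finset.card_le_card hsub
    _ ≤ 2 + 1 := by
        apply le_trans (Finset.card_insert_le _ _)
        apply Nat.add_le_add_right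
        apply le_trans (Finset.card_insert_le _ _)
        simp
    _ = 3 := rfl

lemma sum_bdeg_class (hm : Even m) (hn : Even n) {A : Finset (Sym2 (Vtx m n))}
    (hA : A ⊆ honeyEdges m n) {c : ℕ} (hc : c < 2) :
    ∑ x ∈ Finset.univ.filter (fun x => par m n x = c), bdeg m n A x = A.card := by
  classical
  unfold bdeg
  simp only [Finset.card_filter]
  rw [Finset.sum_comm]
  have key : ∀ e ∈ A,
      (∑ x ∈ Finset.univ.filter (fun x => par m n x = c),
        if x ∈ e then (1 : ℕ) else 0) = 1 := by
    intro e heA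
    have hmem := hA heA
    simp only [honeyEdges, Finset.mem_image, Finset.mem_filter] at hmem
    obtain ⟨⟨a, b⟩, ⟨-, hab⟩, rfl⟩ := hmem
    dsimp only at hab
    have hpar := par_adj m n hm hn hab
    rw [← Finset.card_filter]
    rw [Finset.card_eq_one]
    have hane : par m n a ≠ par m n b := by omega
    have hca : c = par m n a ∨ c = par m n b := by
      have := par_lt m n a; have := par_lt m n b; omega
    rcases hca with rfl | rfl
    · refine ⟨a, ?_⟩
      ext z
      simp only [Finset.mem_filter, Finset.mem_univ, true_and, Sym2.mem_iff,
        Finset.mem_singleton]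
      constructor
      · rintro ⟨hz, rfl | rfl⟩
        · rfl
        · exact absurd hz.symm hane
      · rintro rfl; exact ⟨rfl, Or.inl rfl⟩
    · refine ⟨b, ?_⟩
      ext z
      simp only [Finset.mem_filter, Finset.mem_univ, true_and, Sym2.mem_iff,
        Finset.mem_singleton]
      constructor
      · rintro ⟨hz, rfl | rfl⟩
        · exact absurd hz hane
        · rfl
      · rintro rfl; exact ⟨rfl, Or.inr rfl⟩
  rw [Finset.sum_congr rfl key, Finset.sum_const, smul_eq_mul, mul_one]

lemma card_class (hm : Even m) (hn : Even n) :
    (Finset.univ.filter (fun x : Vtx m n => par m n x = 0)).card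
      = (Finset.univ.filter (fun x : Vtx m n => par m n x = 1)).card := by
  classical
  apply Finset.card_bij' (fun x _ => ((x.1 + 1, x.2) : Vtx m n))
    (fun x _ => ((x.1 - 1, x.2) : Vtx m n))
  · intro x hx
    simp only [Finset.mem_filter, Finset.mem_univ, true_and] at hx ⊢
    have hadj : HoneyAdj m n x (x.1 + 1, x.2) := Or.inl ⟨rfl, Or.inl rfl⟩
    have := par_adj m n hm hn hadj
    omega
  · intro x hx
    simp only [Finset.mem_filter, Finset.mem_univ, true_and] at hx ⊢
    have hadj : HoneyAdj m n x (x.1 - 1, x.2) := Or.inl ⟨rfl, Or.inr (by ring)⟩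
    have := par_adj m n hm hn hadj
    omega
  · intro x _; simp
  · intro x _; simp

theorem neighboring_defects (m n : ℕ) [NeZero m] [NeZero n]
    (hm : Even m) (hn : Even n) (hm4 : 4 ≤ m) (hn4 : 4 ≤ n)
    (st : WormState m n) (hR : FullSupport m n st)
    (hadj : HoneyAdj m n st.1.2.1 st.1.2.2) :
    bdeg m n st.1.1 st.1.2.1 = bdeg m n st.1.1 st.1.2.2 := by
  classical
  obtain ⟨⟨A, u, v⟩, hA0, hodd0⟩ := st
  have hA : A ⊆ honeyEdges m n := hA0
  have hodd : ∀ x, Odd (bdeg m n A x) ↔ ((x = u ∨ x = v) ∧ u ≠ v) := hodd0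
  have hR' : ∀ x, bdeg m n A x ≠ 0 := hR
  have hadj' : HoneyAdj m n u v := hadj
  show bdeg m n A u = bdeg m n A v
  have hpar := par_adj m n hm hn hadj'
  have hne : u ≠ v := by
    intro h; rw [h] at hpar; omega
  have hdu : Odd (bdeg m n A u) := (hodd u).2 ⟨Or.inl rfl, hne⟩
  have hdv : Odd (bdeg m n A v) := (hodd v).2 ⟨Or.inr rfl, hne⟩
  have h2 : ∀ x, x ≠ u → x ≠ v → bdeg m n A x = 2 := by
    intro x hxu hxv
    have h3 := bdeg_le_three m n hn hA x
    have h0 : bdeg m n A x ≠ 0 := hR' x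
    have hnodd : ¬ Odd (bdeg m n A x) := by
      rw [hodd x]; tauto
    rw [Nat.not_odd_iff_even, Nat.even_iff] at hnodd
    omega
  -- the sum of degrees over each parity class equals |A|
  have hsum : ∀ (z : Vtx m n), z = u ∨ z = v →
      A.card = bdeg m n A z
        + 2 * ((Finset.univ.filter (fun x : Vtx m n => par m n x = par m n z)).card - 1) := by
    intro z hz
    have hzmem : z ∈ Finset.univ.filter (fun x : Vtx m n => par m n x = par m n z) := by
      simp
    have hs := sum_bdeg_class m n hm hn hA (par_lt m n z)
    rw [← Finset.add_sum_erase _ _ hzmem] at hs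
    have hconst : ∀ x ∈ (Finset.univ.filter
        (fun x : Vtx m n => par m n x = par m n z)).erase z, bdeg m n A x = 2 := by
      intro x hx
      rw [Finset.mem_erase, Finset.mem_filter] at hx
      obtain ⟨hxz, -, hxp⟩ := hx
      rcases hz with rfl | rfl
      · refine h2 x hxz (fun h => ?_)
        rw [h] at hxp; omega
      · refine h2 x (fun h => ?_) hxz
        rw [h] at hxp; omega
    rw [Finset.sum_congr rfl hconst, Finset.sum_const, smul_eq_mul,
      Finset.card_erase_of_mem hzmem] at hs
    omega
  have hu := hsum u (Or.inl rfl)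
  have hv := hsum v (Or.inr rfl)
  have hcc := card_class m n hm hn
  have humem : u ∈ Finset.univ.filter (fun x : Vtx m n => par m n x = par m n u) := by simp
  have hvmem : v ∈ Finset.univ.filter (fun x : Vtx m n => par m n x = par m n v) := by simp
  have hupos := Finset.card_pos.2 ⟨u, humem⟩
  have hvpos := Finset.card_pos.2 ⟨v, hvmem⟩
  have hcase : (par m n u = 0 ∧ par m n v = 1) ∨ (par m n u = 1 ∧ par m n v = 0) := by
    have := par_lt m n u; have := par_lt m n v; omega
  rcases hcase with ⟨h0, h1⟩ | ⟨h0, h1⟩ <;>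
    rw [h0] at hu hupos <;> rw [h1] at hv hvpos <;> omega


end FPL
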